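/- Let H be a star hypergraph with sink q. Then the set of G-parking functions of the digraph ←H (restricted to the vertex-side coordinates; the edge-side coordinates are forced to be 0) coincides with the set of H-parking functions of H. -/

import Mathlib

open scoped Classical

def degT {V : Type*} [DecidableEq V] (E : Finset (Finset V)) (T : Finset V) (i : V) : ℕ :=
  (E.filter fun e => i ∈ e ∧ ¬ e ⊆ T).card

def IsHParking {V : Type*} [Fintype V] [DecidableEq V] (E : Finset (Finset V)) (q : V)
    (c : V → ℕ) : Prop :=
  ∀ T : Finset V, T.Nonempty → (∀ i ∈ T, i ≠ q) → ∃ i ∈ T, c i < degT E T i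

def HConnected {V : Type*} (E : Finset (Finset V)) : Prop :=
  ∀ v w : V, Relation.ReflTransGen (fun a b => ∃ e ∈ E, a ∈ e ∧ b ∈ e) v w

/-- `b` is a `G`-parking function for the digraph with (directed) adjacency `Adj`:
every nonempty set `S` of nonsink vertices contains `j` with `b j` less than the
number of directed edges from `j` to the outside of `S`. -/
def IsGParking {W : Type*} [Fintype W] (Adj : W → W → Prop) (q : W) (b : W → ℕ) : Prop :=
  ∀ S : Finset W, S.Nonempty → (∀ j ∈ S, j ≠ q) → ∃ j ∈ S,
    b j < (Finset.univ.filter fun w => Adj j w ∧ w ∉ S).card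

/-- Directed adjacency of the digraph `←H` of a star hypergraph. -/
def starAdj {V : Type*} (E : Finset (Finset V)) (q : V) :
    ({e : Finset V // e ∈ E} ⊕ V) → ({e : Finset V // e ∈ E} ⊕ V) → Prop
  | Sum.inl _, Sum.inr v => v = q
  | Sum.inr v, Sum.inl e => v ∈ e.1 ∧ v ≠ q
  | _, _ => False

lemma count_inr {V : Type*} [Fintype V] [DecidableEq V] (E : Finset (Finset V)) (q i : V)
    (hi : i ≠ q) (S : Finset ({e : Finset V // e ∈ E} ⊕ V))
    (hS : ∀ e : {e : Finset V // e ∈ E}, Sum.inl e ∉ S)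
    {inst : DecidablePred fun w => starAdj E q (Sum.inr i) w ∧ w ∉ S} :
    (@Finset.filter _ (fun w => starAdj E q (Sum.inr i) w ∧ w ∉ S) inst Finset.univ).card
      = (E.filter fun e => i ∈ e).card := by
  have hset : @Finset.filter _ (fun w => starAdj E q (Sum.inr i) w ∧ w ∉ S) inst Finset.univ
      = (E.attach.filter fun e => i ∈ e.1).image Sum.inl := by
    ext w
    rcases w with e | v
    · rw [@Finset.mem_filter _ _ inst]
      simp [starAdj, hi, hS e]
    · rw [@Finset.mem_filter _ _ inst]
      simp [starAdj]
  rw [hset, Finset.card_image_of_injective _ Sum.inl_injective,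
    Finset.filter_attach (fun e => i ∈ e) E, Finset.card_map, Finset.card_attach]

lemma count_inl {V : Type*} [Fintype V] [DecidableEq V] (E : Finset (Finset V)) (q : V)
    (e : {e : Finset V // e ∈ E}) (S : Finset ({e : Finset V // e ∈ E} ⊕ V))
    (hq : Sum.inr q ∉ S)
    {inst : DecidablePred fun w => starAdj E q (Sum.inl e) w ∧ w ∉ S} :
    (@Finset.filter _ (fun w => starAdj E q (Sum.inl e) w ∧ w ∉ S) inst Finset.univ).card
      = 1 := by
  have hset : @Finset.filter _ (fun w => starAdj E q (Sum.inl e) w ∧ w ∉ S) inst Finset.univ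
      = {Sum.inr q} := by
    ext w
    rcases w with e' | v
    · rw [@Finset.mem_filter _ _ inst]
      simp [starAdj]
    · rw [@Finset.mem_filter _ _ inst]
      simp only [Finset.mem_filter, Finset.mem_univ, true_and, Finset.mem_singleton,
        Sum.inr.injEq, starAdj]
      constructor
      · rintro ⟨h, _⟩; exact h
      · rintro rfl; exact ⟨rfl, hq⟩
  rw [hset, Finset.card_singleton]

lemma degT_eq {V : Type*} [DecidableEq V] (E : Finset (Finset V)) (q : V)
    (hstar : ∀ e ∈ E, q ∈ e) (T : Finset V) (hq : q ∉ T) (i : V) :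
    degT E T i = (E.filter fun e => i ∈ e).card := by
  unfold degT
  congr 1
  apply Finset.filter_congr
  intro e he
  have : ¬ e ⊆ T := fun h => hq (h (hstar e he))
  simp [this]

/-- For a star hypergraph `H` with sink `q`, the `G`-parking functions of the digraph `←H`
are exactly the configurations vanishing on the edge-side vertices whose restriction to the
vertex-side coordinates is an `H`-parking function of `H`. -/
theorem star_gparking_iff_hparking {V : Type*} [Fintype V] [DecidableEq V]
    (E : Finset (Finset V)) (q : V) (hconn : HConnected E) (hstar : ∀ e ∈ E, q ∈ e)
    (b : ({e : Finset V // e ∈ E} ⊕ V) → ℕ) :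
    IsGParking (starAdj E q) (Sum.inr q) b ↔
      ((∀ e : {e : Finset V // e ∈ E}, b (Sum.inl e) = 0) ∧
        IsHParking E q (fun v => b (Sum.inr v))) := by
  constructor
  · intro hG
    constructor
    · intro e
      obtain ⟨j, hj, hlt⟩ := hG {Sum.inl e} ⟨_, Finset.mem_singleton_self _⟩
        (by intro j hj; simp only [Finset.mem_singleton] at hj; subst hj; simp)
      simp only [Finset.mem_singleton] at hj; subst hj
      rw [count_inl E q e _ (by simp)] at hlt
      omega
    · intro T hT hTq
      obtain ⟨i, hi⟩ := hT
      have hiq : i ≠ q := hTq i hi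
      obtain ⟨j, hj, hlt⟩ := hG {Sum.inr i} ⟨_, Finset.mem_singleton_self _⟩
        (by intro j hj; simp only [Finset.mem_singleton] at hj; subst hj; simpa using hiq)
      simp only [Finset.mem_singleton] at hj; subst hj
      rw [count_inr E q i hiq _ (by intro e; simp)] at hlt
      refine ⟨i, hi, ?_⟩
      rw [degT_eq E q hstar T (fun h => hTq q h rfl) i]
      exact hlt
  · rintro ⟨hb0, hH⟩ S hS hSq
    by_cases he : ∃ e : {e : Finset V // e ∈ E}, Sum.inl e ∈ S
    · obtain ⟨e, he⟩ := he
      refine ⟨Sum.inl e, he, ?_⟩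
      rw [hb0 e, count_inl E q e S (fun h => hSq _ h rfl)]
      omega
    · push_neg at he
      set T : Finset V := Finset.univ.filter (fun v => Sum.inr v ∈ S) with hTdef
      have hTq : q ∉ T := by
        simp only [hTdef, Finset.mem_filter, Finset.mem_univ, true_and]
        intro h; exact hSq _ h rfl
      have hTne : T.Nonempty := by
        obtain ⟨w, hw⟩ := hS
        rcases w with e | v
        · exact absurd hw (he e)
        · exact ⟨v, by simp [hTdef, hw]⟩
      obtain ⟨i, hiT, hlt⟩ := hH T hTne (fun i hi h => hTq (h ▸ hi))
      have hiS : Sum.inr i ∈ S := by simpa [hTdef] using hiT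
      have hiq : i ≠ q := fun h => hTq (h ▸ hiT)
      refine ⟨Sum.inr i, hiS, ?_⟩
      rw [count_inr E q i hiq S he]
      rwa [degT_eq E q hstar T hTq i] at hlt
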